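/- Let p ∈ (1,∞) \ {2} and let X be a real random variable with E|X|^p < ∞, EX = 0, and X not almost surely zero. Then (E[X₊^{p/2}])² + (E[X₋^{p/2}])² + (E[X₊^{p/2}])^{-2/(p-2)}·(E[X₋^{p/2}])^{(2p-2)/(p-2)} + (E[X₋^{p/2}])^{-2/(p-2)}·(E[X₊^{p/2}])^{(2p-2)/(p-2)} ≤ E|X|^p. -/

import Mathlib

open MeasureTheory Real

/-- Scaled core AM-GM inequality. -/
lemma coreI (p : ℝ) (hp1 : 1 < p) (hp2 : p ≠ 2) (u x : ℝ) (hu : 0 < u) (hx : 0 ≤ x) :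
    (1 + p/(p-2)) * (u ^ (p/2) * x ^ (p/2)) ≤ x ^ p + p/(p-2) * (u ^ (p-1) * x) := by
  have hp0 : (0:ℝ) < p := by linarith
  have hp2' : p - 2 ≠ 0 := sub_ne_zero.mpr hp2
  rcases eq_or_lt_of_le hx with h0 | hxpos
  · rw [← h0, Real.zero_rpow (by linarith : (0:ℝ) < p/2).ne',
      Real.zero_rpow hp0.ne']
    simp
  rcases lt_or_gt_of_ne hp2 with hplt | hpgt
  · -- 1 < p < 2
    have hpd : p - 2 < 0 := by linarith
    have h2p : (0:ℝ) < 2*p - 2 := by linarith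
    have hw1 : (0:ℝ) ≤ (2*p-2)/p := div_nonneg (by linarith) hp0.le
    have hw2 : (0:ℝ) ≤ (2-p)/p := div_nonneg (by linarith) hp0.le
    have hw : (2*p-2)/p + (2-p)/p = 1 := by field_simp [hp0.ne']; ring
    have hG : (0:ℝ) ≤ u ^ (p/2) * x ^ (p/2) :=
      mul_nonneg (rpow_nonneg hu.le _) (rpow_nonneg hx _)
    have am := Real.geom_mean_le_arith_mean2_weighted hw1 hw2 hG (rpow_nonneg hx p) hw
    have e1 : (u ^ (p/2) * x ^ (p/2)) ^ ((2*p-2)/p) * (x ^ p) ^ ((2-p)/p)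
        = u ^ (p-1) * x := by
      rw [Real.mul_rpow (rpow_nonneg hu.le _) (rpow_nonneg hx _),
        ← Real.rpow_mul hu.le, ← Real.rpow_mul hx, ← Real.rpow_mul hx,
        mul_assoc, ← Real.rpow_add hxpos,
        show p/2 * ((2*p-2)/p) + p * ((2-p)/p) = 1 by field_simp [hp0.ne']; ring,
        Real.rpow_one,
        show p/2 * ((2*p-2)/p) = p - 1 by field_simp [hp0.ne']]
    rw [e1] at am
    have hmul := mul_le_mul_of_nonneg_left am
      (div_nonneg hp0.le (by linarith) : (0:ℝ) ≤ p/(2-p))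
    have e2 : p/(2-p) * ((2*p-2)/p * (u ^ (p/2) * x ^ (p/2)) + (2-p)/p * x ^ p)
        = (2*p-2)/(2-p) * (u ^ (p/2) * x ^ (p/2)) + x ^ p := by
      have h2mp : (2:ℝ) - p ≠ 0 := by linarith
      field_simp [hp0.ne']
    rw [e2] at hmul
    have e3 : 1 + p/(p-2) = -((2*p-2)/(2-p)) := by
      rw [show (2:ℝ)-p = -(p-2) by ring, div_neg, neg_neg]
      field_simp [hp2']
      ring
    have e4 : p/(p-2) = -(p/(2-p)) := by
      rw [show (2:ℝ)-p = -(p-2) by ring, div_neg, neg_neg]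
    rw [e3, e4]
    nlinarith [hmul]
  · -- 2 < p
    have hpd : (0:ℝ) < p - 2 := by linarith
    have h2p : (0:ℝ) < 2*p - 2 := by linarith
    have hp1' : p - 1 ≠ 0 := by linarith
    have hw1 : (0:ℝ) ≤ (p-2)/(2*p-2) := div_nonneg (by linarith) (by linarith)
    have hw2 : (0:ℝ) ≤ p/(2*p-2) := div_nonneg hp0.le (by linarith)
    have hw : (p-2)/(2*p-2) + p/(2*p-2) = 1 := by field_simp [h2p.ne']; ring
    have am := Real.geom_mean_le_arith_mean2_weighted hw1 hw2
      (rpow_nonneg hx p) (mul_nonneg (rpow_nonneg hu.le (p-1)) hx) hw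
    have e1 : (x ^ p) ^ ((p-2)/(2*p-2)) * (u ^ (p-1) * x) ^ (p/(2*p-2))
        = u ^ (p/2) * x ^ (p/2) := by
      rw [Real.mul_rpow (rpow_nonneg hu.le _) hx,
        ← Real.rpow_mul hx, ← Real.rpow_mul hu.le,
        show (x:ℝ) ^ (p * ((p-2)/(2*p-2))) * (u ^ ((p-1) * (p/(2*p-2))) * x ^ (p/(2*p-2)))
          = u ^ ((p-1) * (p/(2*p-2))) * (x ^ (p * ((p-2)/(2*p-2))) * x ^ (p/(2*p-2))) by ring,
        ← Real.rpow_add hxpos,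
        show (p-1) * (p/(2*p-2)) = p/2 by field_simp [h2p.ne'],
        show p * ((p-2)/(2*p-2)) + p/(2*p-2) = p/2 by field_simp [h2p.ne']; ring]
    rw [e1] at am
    have hmul := mul_le_mul_of_nonneg_left am
      (div_nonneg (by linarith) (by linarith) : (0:ℝ) ≤ (2*p-2)/(p-2))
    have e2 : (2*p-2)/(p-2) * ((p-2)/(2*p-2) * x ^ p + p/(2*p-2) * (u ^ (p-1) * x))
        = x ^ p + p/(p-2) * (u ^ (p-1) * x) := by
      field_simp [h2p.ne']
    have e3 : 1 + p/(p-2) = (2*p-2)/(p-2) := by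
      field_simp [hp2']
      ring
    rw [e2] at hmul
    rw [e3]
    linarith

/-- Bernoulli tangent sign lemma. -/
lemma bern_sign (q : ℝ) (hq : 0 < q) (u x : ℝ) (hu : 0 < u) (hx : 0 ≤ x) :
    0 ≤ (q - 1) * (x ^ q - u ^ q - q * (u ^ q / u) * (x - u)) := by
  have hs : -1 ≤ x/u - 1 := by
    have : 0 ≤ x/u := div_nonneg hx hu.le
    linarith
  have hxu : x ^ q = u ^ q * (1 + (x/u - 1)) ^ q := by
    rw [← Real.mul_rpow hu.le (by linarith : (0:ℝ) ≤ 1 + (x/u - 1))]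
    congr 1
    field_simp
    ring
  have hkey : x ^ q - u ^ q - q * (u ^ q / u) * (x - u)
      = u ^ q * ((1 + (x/u - 1)) ^ q - (1 + q * (x/u - 1))) := by
    rw [hxu]
    field_simp
    ring
  rw [hkey]
  have hupos : (0:ℝ) < u ^ q := rpow_pos_of_pos hu q
  rcases le_total q 1 with h | h
  · have hb := rpow_one_add_le_one_add_mul_self hs hq.le h
    have h1 : 0 ≤ (1-q) * ((1 + q * (x/u - 1)) - (1 + (x/u - 1)) ^ q) :=
      mul_nonneg (by linarith) (by linarith)
    nlinarith [mul_nonneg hupos.le h1]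
  · have hb := one_add_mul_self_le_rpow_one_add hs h
    have h1 : 0 ≤ (q-1) * ((1 + (x/u - 1)) ^ q - (1 + q * (x/u - 1))) :=
      mul_nonneg (by linarith) (by linarith)
    nlinarith [mul_nonneg hupos.le h1]

/-- One-sided pointwise tangent inequality. -/
lemma side (p : ℝ) (hp1 : 1 < p) (hp2 : p ≠ 2) (u a γ K : ℝ) (hu : 0 < u)
    (hγ : γ = p * ((u ^ (p/2))^2 / u) - p * a / 2 * (u ^ (p/2) / u))
    (hK : K = (1 - p/2) * a * u ^ (p/2) + (p - 1) * (u ^ (p/2))^2)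
    (ha : (p - 2) * a ≤ 2 * (p - 1) * u ^ (p/2))
    (x : ℝ) (hx : 0 ≤ x) :
    a * x ^ (p/2) + γ * x - K ≤ x ^ p := by
  have hp2' : p - 2 ≠ 0 := sub_ne_zero.mpr hp2
  have hU : 0 < u ^ (p/2) := rpow_pos_of_pos hu _
  have hup : u ^ (p-1) = (u ^ (p/2))^2 / u := by
    have h2 : (u ^ (p/2))^2 = u ^ p := by
      rw [← Real.rpow_natCast (u ^ (p/2)) 2, ← Real.rpow_mul hu.le]
      norm_num
    have h3 : u ^ (p-1) * u = u ^ p := by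
      rw [← Real.rpow_add_one hu.ne' (p-1)]
      norm_num
    rw [h2, eq_div_iff hu.ne', h3]
  have core := coreI p hp1 hp2 u x hu hx
  rw [hup] at core
  have bern := bern_sign (p/2) (by linarith) u x hu hx
  have hberq : u ^ (p/2) / u ^ (1:ℝ) = u ^ (p/2) / u := by rw [Real.rpow_one]
  have hcomb : 0 ≤ (2*(p-1)*(u ^ (p/2)) - (p-2)*a)
      * ((p-2) * (x ^ (p/2) - u ^ (p/2) - p/2 * (u ^ (p/2) / u) * (x - u))) := by
    apply mul_nonneg (by linarith)
    nlinarith [bern]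
  have key : (p-2)^2 * (x ^ p - (a * x ^ (p/2) + γ * x - K)) =
      (p-2)^2 * ((x ^ p + p/(p-2) * ((u ^ (p/2))^2 / u * x))
        - (1 + p/(p-2)) * (u ^ (p/2) * x ^ (p/2)))
      + (2*(p-1)*(u ^ (p/2)) - (p-2)*a)
        * ((p-2) * (x ^ (p/2) - u ^ (p/2) - p/2 * (u ^ (p/2) / u) * (x - u))) := by
    rw [hγ, hK]
    field_simp
    ring
  have hsq : (0:ℝ) < (p-2)^2 := lt_of_le_of_ne (sq_nonneg _) (Ne.symm (pow_ne_zero 2 hp2'))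
  nlinarith [key, hcomb, core, hsq]

set_option maxHeartbeats 2000000 in
theorem stmt_4 {Ω : Type*} [MeasurableSpace Ω] (μ : Measure Ω) [IsProbabilityMeasure μ]
    (p : ℝ) (hp1 : 1 < p) (hp2 : p ≠ 2) (X : Ω → ℝ) (hX : Measurable X)
    (hLp : Integrable (fun ω => |X ω| ^ p) μ) (hint : Integrable X μ)
    (hmean : ∫ ω, X ω ∂μ = 0)
    (hposP : 0 < ∫ ω, (max (X ω) 0) ^ (p / 2) ∂μ)
    (hposM : 0 < ∫ ω, (max (-X ω) 0) ^ (p / 2) ∂μ) :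
    (∫ ω, (max (X ω) 0) ^ (p / 2) ∂μ) ^ (2 : ℝ) +
      (∫ ω, (max (-X ω) 0) ^ (p / 2) ∂μ) ^ (2 : ℝ) +
      (∫ ω, (max (X ω) 0) ^ (p / 2) ∂μ) ^ (-(2 / (p - 2))) *
        (∫ ω, (max (-X ω) 0) ^ (p / 2) ∂μ) ^ ((2 * p - 2) / (p - 2)) +
      (∫ ω, (max (-X ω) 0) ^ (p / 2) ∂μ) ^ (-(2 / (p - 2))) *
        (∫ ω, (max (X ω) 0) ^ (p / 2) ∂μ) ^ ((2 * p - 2) / (p - 2)) ≤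
      ∫ ω, |X ω| ^ p ∂μ := by
  have hp0 : (0:ℝ) < p := by linarith
  have hp2' : p - 2 ≠ 0 := sub_ne_zero.mpr hp2
  set A := ∫ ω, (max (X ω) 0) ^ (p / 2) ∂μ with hAdef
  set B := ∫ ω, (max (-X ω) 0) ^ (p / 2) ∂μ with hBdef
  clear_value A B
  have hA : 0 < A := hposP
  have hB : 0 < B := hposM
  have hAB : 0 < A / B := div_pos hA hB
  obtain ⟨t, ht, ht1, ht2⟩ : ∃ t : ℝ, 0 < t ∧ (A/B) ^ (2/(p-2)) = t ∧ t ^ ((p-2)/2) = A/B := by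
    refine ⟨(A/B) ^ (2/(p-2)), rpow_pos_of_pos hAB _, rfl, ?_⟩
    rw [← Real.rpow_mul hAB.le, show 2/(p-2) * ((p-2)/2) = 1 by field_simp, Real.rpow_one]
  obtain ⟨v, hv, hv2⟩ : ∃ v : ℝ, 0 < v ∧ v ^ (p/2) = B*(t+1)/t := by
    have hBt : 0 < B*(t+1)/t := div_pos (mul_pos hB (by linarith)) ht
    refine ⟨(B*(t+1)/t) ^ (2/p), rpow_pos_of_pos hBt _, ?_⟩
    rw [← Real.rpow_mul hBt.le, show 2/p * (p/2) = 1 by field_simp, Real.rpow_one]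
  obtain ⟨u, hueq⟩ : ∃ u : ℝ, u = t * v := ⟨_, rfl⟩
  have hu : 0 < u := by rw [hueq]; exact mul_pos ht hv
  have huv : 0 < u + v := by linarith
  obtain ⟨U, hU, hUeq⟩ : ∃ U : ℝ, 0 < U ∧ U = u ^ (p/2) :=
    ⟨_, rpow_pos_of_pos hu _, rfl⟩
  obtain ⟨V, hV, hVeq⟩ : ∃ V : ℝ, 0 < V ∧ V = v ^ (p/2) :=
    ⟨_, rpow_pos_of_pos hv _, rfl⟩
  have hVval : V = B*(t+1)/t := by rw [hVeq, hv2]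
  have hUval : U = t * (A/B) * (B*(t+1)/t) := by
    rw [hUeq, hueq, Real.mul_rpow ht.le hv.le, hv2, show p/2 = 1 + (p-2)/2 by ring,
      Real.rpow_add ht, Real.rpow_one, ht2]
  have htv : (0:ℝ) < t * v + v := by nlinarith
  have hE1 : A = U * v / (u + v) := by
    rw [hUval, hueq]
    field_simp [hB.ne', ht.ne', hv.ne', htv.ne']
  have hE2 : B = V * u / (u + v) := by
    rw [hVval, hueq]
    field_simp [hB.ne', ht.ne', hv.ne', htv.ne']
  -- coefficients
  set a : ℝ := (2*(p-1)*(U^2-V^2)*u + 2*(p-2)*(U^2*v+V^2*u)) / ((p-2)*(u+v)*U) with hadef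
  set b : ℝ := (2*(p-2)*(U^2*v+V^2*u) - 2*(p-1)*(U^2-V^2)*v) / ((p-2)*(u+v)*V) with hbdef
  set γ : ℝ := p * (U^2 / u) - p * a / 2 * (U / u) with hγdef
  set K : ℝ := (U^2*v + V^2*u) / (u+v) with hKdef
  clear_value a b γ K
  have hKa : K = (1 - p/2) * a * U + (p - 1) * U^2 := by
    rw [hKdef, hadef]
    field_simp [hp2', hu.ne', hv.ne', huv.ne', hU.ne', hV.ne']
    ring
  have hKb : K = (1 - p/2) * b * V + (p - 1) * V^2 := by
    rw [hKdef, hbdef]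
    field_simp [hp2', hu.ne', hv.ne', huv.ne', hU.ne', hV.ne']
    ring
  have hγb : -γ = p * (V^2 / v) - p * b / 2 * (V / v) := by
    rw [hγdef, hadef, hbdef]
    field_simp [hp2', hu.ne', hv.ne', huv.ne', hU.ne', hV.ne']
    ring
  have haa : (p - 2) * a ≤ 2 * (p - 1) * U := by
    have h1 : (p - 2) * a = (2*(p-1)*(U^2-V^2)*u + 2*(p-2)*(U^2*v+V^2*u)) / ((u+v)*U) := by
      rw [hadef]
      field_simp [hp2', hu.ne', hv.ne', huv.ne', hU.ne', hV.ne']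
    rw [h1, div_le_iff₀ (mul_pos huv hU)]
    have h2 : 2*(p-1)*U*((u+v)*U) - (2*(p-1)*(U^2-V^2)*u + 2*(p-2)*(U^2*v+V^2*u))
        = 2*V^2*u + 2*U^2*v := by ring
    linarith [h2, mul_pos (pow_pos hV 2) hu, mul_pos (pow_pos hU 2) hv]
  have hbb : (p - 2) * b ≤ 2 * (p - 1) * V := by
    have h1 : (p - 2) * b = (2*(p-2)*(U^2*v+V^2*u) - 2*(p-1)*(U^2-V^2)*v) / ((u+v)*V) := by
      rw [hbdef]
      field_simp [hp2', hu.ne', hv.ne', huv.ne', hU.ne', hV.ne']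
    rw [h1, div_le_iff₀ (mul_pos huv hV)]
    have h2 : 2*(p-1)*V*((u+v)*V) - (2*(p-2)*(U^2*v+V^2*u) - 2*(p-1)*(U^2-V^2)*v)
        = 2*V^2*u + 2*U^2*v := by ring
    linarith [h2, mul_pos (pow_pos hV 2) hu, mul_pos (pow_pos hU 2) hv]
  -- integrability
  have hmono : ∀ (f : Ω → ℝ), Measurable f → (∀ ω, 0 ≤ f ω) → (∀ ω, f ω ≤ |X ω|) →
      Integrable (fun ω => (f ω) ^ (p/2)) μ := by
    intro f hf hf0 hfb
    apply Integrable.mono' ((integrable_const (1:ℝ)).add hLp)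
    · exact ((Real.continuous_rpow_const (by linarith : (0:ℝ) ≤ p/2)).measurable.comp hf).aestronglyMeasurable
    · filter_upwards with ω
      simp only [Pi.add_apply]
      rw [Real.norm_eq_abs, abs_of_nonneg (rpow_nonneg (hf0 ω) _)]
      have h1 : (f ω) ^ (p/2) ≤ |X ω| ^ (p/2) :=
        Real.rpow_le_rpow (hf0 ω) (hfb ω) (by linarith : (0:ℝ) ≤ p/2)
      have h2 : |X ω| ^ (p/2) ≤ 1 + |X ω| ^ p := by
        rcases le_total (|X ω|) 1 with hc | hc
        · have h3 := Real.rpow_le_one (abs_nonneg _) hc (by linarith : (0:ℝ) ≤ p/2)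
          have h4 := Real.rpow_nonneg (abs_nonneg (X ω)) p
          linarith
        · have h3 := Real.rpow_le_rpow_of_exponent_le hc (by linarith : p/2 ≤ p)
          linarith
      linarith
  have int1 : Integrable (fun ω => (max (X ω) 0) ^ (p/2)) μ := by
    apply hmono _ (hX.max measurable_const)
    · intro ω; exact le_max_right _ _
    · intro ω; exact max_le (le_abs_self _) (abs_nonneg _)
  have int2 : Integrable (fun ω => (max (-X ω) 0) ^ (p/2)) μ := by
    apply hmono _ (hX.neg.max measurable_const)
    · intro ω; exact le_max_right _ _
    · intro ω
      refine max_le ?_ (abs_nonneg _)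
      rw [← abs_neg]
      exact le_abs_self _
  -- pointwise inequality
  have hpt : ∀ ω, a * (max (X ω) 0) ^ (p/2) + b * (max (-X ω) 0) ^ (p/2)
      + γ * X ω - K ≤ |X ω| ^ p := by
    intro ω
    by_cases hω : 0 ≤ X ω
    · have h2 : max (-X ω) 0 = 0 := max_eq_right (neg_nonpos.mpr hω)
      have h0 : (0:ℝ) ^ (p/2) = 0 := Real.zero_rpow (ne_of_gt (by linarith : (0:ℝ) < p/2))
      have hs := side p hp1 hp2 u a γ K hu
        (by rw [← hUeq]; exact hγdef)
        (by rw [← hUeq]; exact hKa)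
        (by rw [← hUeq]; exact haa) (X ω) hω
      rw [h2, h0, abs_of_nonneg hω, max_eq_left hω]
      linarith
    · push_neg at hω
      have h1 : max (X ω) 0 = 0 := max_eq_right hω.le
      have h0 : (0:ℝ) ^ (p/2) = 0 := Real.zero_rpow (ne_of_gt (by linarith : (0:ℝ) < p/2))
      have hs := side p hp1 hp2 v b (-γ) K hv
        (by rw [← hVeq]; exact hγb)
        (by rw [← hVeq]; exact hKb)
        (by rw [← hVeq]; exact hbb) (-X ω) (by linarith)
      rw [h1, h0, abs_of_neg hω, max_eq_left (by linarith : (0:ℝ) ≤ -X ω)]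
      nlinarith [hs]
  -- integrate
  have if1 : Integrable (fun ω => a * (max (X ω) 0) ^ (p/2) + b * (max (-X ω) 0) ^ (p/2)) μ := by
    exact (int1.const_mul a).add (int2.const_mul b)
  have if2 : Integrable (fun ω => a * (max (X ω) 0) ^ (p/2) + b * (max (-X ω) 0) ^ (p/2)
      + γ * X ω) μ := by
    exact if1.add (hint.const_mul γ)
  have hg_int : Integrable (fun ω => a * (max (X ω) 0) ^ (p/2) + b * (max (-X ω) 0) ^ (p/2)
      + γ * X ω - K) μ := by
    exact if2.sub (integrable_const K)
  have hIneq : ∫ ω, (a * (max (X ω) 0) ^ (p/2) + b * (max (-X ω) 0) ^ (p/2)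
      + γ * X ω - K) ∂μ ≤ ∫ ω, |X ω| ^ p ∂μ :=
    integral_mono hg_int hLp hpt
  have hIval : ∫ ω, (a * (max (X ω) 0) ^ (p/2) + b * (max (-X ω) 0) ^ (p/2)
      + γ * X ω - K) ∂μ = a * A + b * B - K := by
    rw [integral_sub if2 (integrable_const K),
      integral_add if1 (hint.const_mul γ),
      integral_add (int1.const_mul a) (int2.const_mul b),
      integral_const_mul, integral_const_mul, integral_const_mul, hmean, integral_const,
      hAdef, hBdef]
    simp [measure_univ]
  have hsum : a * A + b * B - K = K := by
    rw [hE1, hE2, hadef, hbdef, hKdef]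
    field_simp [hp2', hu.ne', hv.ne', huv.ne', hU.ne', hV.ne']
    ring
  -- rewrite the four terms
  have e : -(2/(p-2)) + (2*p-2)/(p-2) = 2 := by
    field_simp [hp2']
    ring
  have hBsq : B ^ (2:ℝ) = B * B := by
    rw [show (2:ℝ) = ((2:ℕ):ℝ) by norm_num, Real.rpow_natCast]
    ring
  have hAsq : A ^ (2:ℝ) = A * A := by
    rw [show (2:ℝ) = ((2:ℕ):ℝ) by norm_num, Real.rpow_natCast]
    ring
  have htinv : t⁻¹ = v / u := by
    rw [hueq]
    rw [eq_div_iff (mul_pos ht hv).ne']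
    field_simp [ht.ne']
  have htval : t = u / v := by
    rw [hueq, mul_div_assoc, div_self hv.ne', mul_one]
  have hL3 : A ^ (-(2/(p-2))) * B ^ ((2*p-2)/(p-2)) = B * B * (v/u) := by
    have h1 : A ^ (-(2/(p-2))) = (A/B) ^ (-(2/(p-2))) * B ^ (-(2/(p-2))) := by
      rw [← Real.mul_rpow hAB.le hB.le, div_mul_cancel₀ _ hB.ne']
    have h2 : (A/B) ^ (-(2/(p-2))) = t⁻¹ := by
      rw [Real.rpow_neg hAB.le, ht1]
    rw [h1, h2, mul_assoc, ← Real.rpow_add hB, e, hBsq, htinv]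
    ring
  have hL4 : B ^ (-(2/(p-2))) * A ^ ((2*p-2)/(p-2)) = A * A * (u/v) := by
    have h1 : B ^ (-(2/(p-2))) = (B/A) ^ (-(2/(p-2))) * A ^ (-(2/(p-2))) := by
      rw [← Real.mul_rpow (div_pos hB hA).le hA.le, div_mul_cancel₀ _ hA.ne']
    have h2 : (B/A) ^ (-(2/(p-2))) = t := by
      rw [show B/A = (A/B)⁻¹ by rw [inv_div], Real.inv_rpow hAB.le, Real.rpow_neg hAB.le,
        inv_inv, ht1]
    rw [h1, h2, mul_assoc, ← Real.rpow_add hA, e, hAsq, htval]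
    ring
  rw [hL3, hL4, hAsq, hBsq]
  have hfin : A * A + B * B + B * B * (v/u) + A * A * (u/v) = K := by
    rw [hE1, hE2, hKdef]
    field_simp [hu.ne', hv.ne', huv.ne', hU.ne', hV.ne']
    ring
  rw [hfin]
  calc K = a * A + b * B - K := hsum.symm
    _ = ∫ ω, (a * (max (X ω) 0) ^ (p/2) + b * (max (-X ω) 0) ^ (p/2) + γ * X ω - K) ∂μ :=
        hIval.symm
    _ ≤ ∫ ω, |X ω| ^ p ∂μ := hIneq
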